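/- The sequence {|B_{2n}|}_{n≥1} of absolute values of the even-indexed Bernoulli numbers is log-convex: for every integer n ≥ 2, |B_{2n}|² ≤ |B_{2n−2}|·|B_{2n+2}|. -/
import Mathlib

open Real Nat

/-- Cauchy–Schwarz inequality for infinite sums of nonnegative reals. -/
lemma tsum_cauchy_schwarz (f g : ℕ → ℝ) (hf : ∀ m, 0 ≤ f m) (hg : ∀ m, 0 ≤ g m)
    (hf2 : Summable (fun m => f m ^ 2)) (hg2 : Summable (fun m => g m ^ 2)) :
    (∑' m, f m * g m) ^ 2 ≤ (∑' m, f m ^ 2) * ∑' m, g m ^ 2 := by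
  have hfg : Summable (fun m => f m * g m) := by
    refine Summable.of_nonneg_of_le (fun m => mul_nonneg (hf m) (hg m)) (fun m => ?_)
      (hf2.add hg2)
    nlinarith [sq_nonneg (f m - g m), mul_nonneg (hf m) (hg m)]
  set A := ∑' m, f m ^ 2 with hA
  set B := ∑' m, g m ^ 2 with hB
  have hA0 : 0 ≤ A := tsum_nonneg fun m => sq_nonneg _
  have hB0 : 0 ≤ B := tsum_nonneg fun m => sq_nonneg _
  have key : ∑' m, f m * g m ≤ Real.sqrt (A * B) := by
    refine Summable.tsum_le_of_sum_le hfg fun s => ?_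
    have h1 := Finset.sum_mul_sq_le_sq_mul_sq s f g
    have h2 : (∑ i ∈ s, f i ^ 2) ≤ A := Summable.sum_le_tsum s (fun i _ => sq_nonneg _) hf2
    have h3 : (∑ i ∈ s, g i ^ 2) ≤ B := Summable.sum_le_tsum s (fun i _ => sq_nonneg _) hg2
    refine Real.le_sqrt_of_sq_le ?_
    calc (∑ i ∈ s, f i * g i) ^ 2 ≤ (∑ i ∈ s, f i ^ 2) * ∑ i ∈ s, g i ^ 2 := h1
      _ ≤ A * B := by
          refine mul_le_mul h2 h3 (Finset.sum_nonneg fun i _ => sq_nonneg _) hA0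
  calc (∑' m, f m * g m) ^ 2 ≤ Real.sqrt (A * B) ^ 2 := by
        refine pow_le_pow_left₀ (tsum_nonneg fun m => mul_nonneg (hf m) (hg m)) key 2
    _ = A * B := Real.sq_sqrt (mul_nonneg hA0 hB0)

/-- Formula for `|B_{2k}|` in terms of zeta values. -/
lemma abs_bernoulli_eq (k : ℕ) (hk : k ≠ 0) :
    |(bernoulli (2 * k) : ℝ)| =
      (∑' m : ℕ, 1 / (m : ℝ) ^ (2 * k)) * (2 * k)! / (2 ^ (2 * k - 1) * π ^ (2 * k)) := by
  have h := (hasSum_zeta_nat hk).tsum_eq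
  have hπ : (0:ℝ) < π := Real.pi_pos
  have hc : (0:ℝ) < 2 ^ (2 * k - 1) * π ^ (2 * k) / (2 * k)! := by positivity
  have hZ : (0:ℝ) ≤ ∑' m : ℕ, 1 / (m : ℝ) ^ (2 * k) :=
    tsum_nonneg fun m => by positivity
  have h2 : (∑' m : ℕ, 1 / (m : ℝ) ^ (2 * k))
      = 2 ^ (2 * k - 1) * π ^ (2 * k) * |(bernoulli (2 * k) : ℝ)| / (2 * k)! := by
    rw [← abs_of_nonneg hZ, h, abs_div, abs_mul, abs_mul, abs_mul, abs_pow, abs_neg, abs_one,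
      one_pow, one_mul, abs_of_pos (show (0:ℝ) < (2:ℝ)^(2*k-1) by positivity),
      abs_of_pos (show (0:ℝ) < π^(2*k) by positivity),
      abs_of_pos (show (0:ℝ) < ((2*k)! : ℝ) by positivity)]
  rw [h2]
  field_simp

/-- The sequence `{|B_{2n}|}_{n ≥ 1}` is log-convex, where `B_n` is the
`n`-th Bernoulli number. -/
theorem abs_bernoulli_logConvex (n : ℕ) (hn : 2 ≤ n) :
    |(bernoulli (2 * n) : ℝ)| ^ 2 ≤
      |(bernoulli (2 * n - 2) : ℝ)| * |(bernoulli (2 * n + 2) : ℝ)| := by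
  obtain ⟨m, rfl⟩ : ∃ m, n = m + 2 := ⟨n - 2, by omega⟩
  have e1 : 2 * (m + 2) - 2 = 2 * (m + 1) := by omega
  have e3 : 2 * (m + 2) + 2 = 2 * (m + 3) := by omega
  rw [e1, e3, abs_bernoulli_eq (m+1) (by omega), abs_bernoulli_eq (m+2) (by omega),
    abs_bernoulli_eq (m+3) (by omega)]
  set Z1 := ∑' j : ℕ, 1 / (j : ℝ) ^ (2 * (m + 1)) with hZ1
  set Z2 := ∑' j : ℕ, 1 / (j : ℝ) ^ (2 * (m + 2)) with hZ2
  set Z3 := ∑' j : ℕ, 1 / (j : ℝ) ^ (2 * (m + 3)) with hZ3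
  have hπ : (0:ℝ) < π := Real.pi_pos
  -- Cauchy–Schwarz: Z2 ^ 2 ≤ Z1 * Z3
  have hCS : Z2 ^ 2 ≤ Z1 * Z3 := by
    have hfg : (fun j : ℕ => (1 / (j:ℝ) ^ (m+1)) * (1 / (j:ℝ) ^ (m+3)))
        = fun j : ℕ => 1 / (j:ℝ) ^ (2 * (m+2)) := by
      funext j
      rw [_root_.div_mul_div_comm, one_mul, ← pow_add,
        show (m+1)+(m+3) = 2*(m+2) from by ring]
    have hf2 : (fun j : ℕ => (1 / (j:ℝ) ^ (m+1)) ^ 2)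
        = fun j : ℕ => 1 / (j:ℝ) ^ (2 * (m+1)) := by
      funext j; rw [div_pow, one_pow, ← pow_mul, show (m+1)*2 = 2*(m+1) from by ring]
    have hg2 : (fun j : ℕ => (1 / (j:ℝ) ^ (m+3)) ^ 2)
        = fun j : ℕ => 1 / (j:ℝ) ^ (2 * (m+3)) := by
      funext j; rw [div_pow, one_pow, ← pow_mul, show (m+3)*2 = 2*(m+3) from by ring]
    have := tsum_cauchy_schwarz (fun j : ℕ => 1 / (j:ℝ) ^ (m+1))
      (fun j : ℕ => 1 / (j:ℝ) ^ (m+3)) (fun j => by positivity) (fun j => by positivity)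
      (by rw [hf2]; exact summable_one_div_nat_pow.mpr (by omega))
      (by rw [hg2]; exact summable_one_div_nat_pow.mpr (by omega))
    rw [hfg, hf2, hg2] at this
    simpa [hZ1, hZ2, hZ3] using this
  have hZ1nn : 0 ≤ Z1 := tsum_nonneg fun j => by positivity
  have hZ3nn : 0 ≤ Z3 := tsum_nonneg fun j => by positivity
  have hZ2nn : 0 ≤ Z2 := tsum_nonneg fun j => by positivity
  -- factorial inequality
  have hfactN : (2*(m+2))! * (2*(m+2))! ≤ (2*(m+1))! * (2*(m+3))! := by
    have h4 : (2*(m+2))! = (2*m+4) * ((2*m+3) * (2*(m+1))!) := by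
      rw [show 2*(m+2) = (2*m+3)+1 by ring, Nat.factorial_succ,
        show 2*m+3 = (2*(m+1))+1 by ring, Nat.factorial_succ]
      ring_nf
    have h6 : (2*(m+3))! = (2*m+6) * ((2*m+5) * (2*(m+2))!) := by
      rw [show 2*(m+3) = (2*m+5)+1 by ring, Nat.factorial_succ,
        show 2*m+5 = (2*(m+2))+1 by ring, Nat.factorial_succ]
      ring_nf
    calc (2*(m+2))! * (2*(m+2))!
        = ((2*m+4) * (2*m+3)) * ((2*(m+1))! * (2*(m+2))!) := by rw [h4]; ring
      _ ≤ ((2*m+6) * (2*m+5)) * ((2*(m+1))! * (2*(m+2))!) := by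
          exact Nat.mul_le_mul_right _ (Nat.mul_le_mul (by omega) (by omega))
      _ = (2*(m+1))! * (2*(m+3))! := by rw [h6]; ring
  have hfact : ((2*(m+2))! : ℝ) ^ 2 ≤ ((2*(m+1))! : ℝ) * ((2*(m+3))! : ℝ) := by
    have := hfactN
    rw [sq]
    exact_mod_cast this
  -- denominators
  have e2a : 2 * (m+2) - 1 = 2*m+3 := by omega
  have e1a : 2 * (m+1) - 1 = 2*m+1 := by omega
  have e3a : 2 * (m+3) - 1 = 2*m+5 := by omega
  rw [e2a, e1a, e3a]
  have hden : ((2:ℝ) ^ (2*m+3) * π ^ (2*(m+2))) ^ 2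
      = ((2:ℝ) ^ (2*m+1) * π ^ (2*(m+1))) * ((2:ℝ) ^ (2*m+5) * π ^ (2*(m+3))) := by
    rw [mul_pow, ← pow_mul, ← pow_mul]
    rw [mul_mul_mul_comm, ← pow_add, ← pow_add]
    ring_nf
  have hDpos : (0:ℝ) < ((2:ℝ) ^ (2*m+3) * π ^ (2*(m+2))) ^ 2 := by positivity
  rw [div_pow, _root_.div_mul_div_comm, hden]
  rw [div_le_div_iff_of_pos_right (by rw [← hden]; exact hDpos)]
  calc (Z2 * ((2*(m+2))! : ℝ)) ^ 2 = Z2 ^ 2 * ((2*(m+2))! : ℝ) ^ 2 := by ring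
    _ ≤ (Z1 * Z3) * (((2*(m+1))! : ℝ) * ((2*(m+3))! : ℝ)) := by
        refine mul_le_mul hCS hfact (by positivity) (mul_nonneg hZ1nn hZ3nn)
    _ = Z1 * ((2*(m+1))! : ℝ) * (Z3 * ((2*(m+3))! : ℝ)) := by ring
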